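/- Consider the SWAC setting S_n with valuation set V = [0,1], D the uniform distribution on [0,1], consumer-surplus reward g(v,p) = v − p, and cost equal to the over-time cost function of the n-day rental game with i.i.d. uniform [0,1] valuations. Then: (1) among fixed-rate SWACs it is w.l.o.g. optimal to sell exactly one unit to every arriving agent for free, achieving expected reward 1/2; (2) the optimal n-day rental reward satisfies R_n ≥ n/2; and (3) a rental mechanism that is optimal among fixed-rate rental mechanisms has expected reward exactly n/2. -/

import Mathlib

open MeasureTheory Filter

namespace RentalGame

/-- The *filter* of a payment schedule: the highest cumulative average payment
over all prefixes (`0` for the empty schedule). -/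
noncomputable def filt (l : List ℝ) : ℝ :=
  ((List.range l.length).map (fun k => (l.take (k + 1)).sum / ((k : ℝ) + 1))).foldr max 0

/-- Utility of an agent with valuation `v` facing payment schedule `l`:
allocation times valuation minus total payment. -/
noncomputable def util (l : List ℝ) (v : ℝ) : ℝ := (l.length : ℝ) * v - l.sum

/-- Gross seller reward `Σ_i g(v, p_i)` from schedule `l` and valuation `v`. -/
noncomputable def gross (g : ℝ → ℝ → ℝ) (v : ℝ) (l : List ℝ) : ℝ := (l.map (g v)).sum

/-- A stagewise auction with seller cost (SWAC) with `n` units and valuation set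
`V ⊆ [0,∞)`.  It consists of a bidding set `B`, a payment schedule for every bid,
and the bid chosen by each agent valuation, which is required to be stagewise-IR
(its filter does not exceed the valuation) and utility-maximizing among all
allowed bids. -/
structure SWAC (n : ℕ) (V : Set ℝ) where
  B : Set ℝ
  sched : ℝ → List ℝ
  bid : ℝ → ℝ
  len_le : ∀ b ∈ B, (sched b).length ≤ n
  pay_nonneg : ∀ b ∈ B, ∀ p ∈ sched b, 0 ≤ p
  bid_mem : ∀ v ∈ V, bid v ∈ B
  bid_IR : ∀ v ∈ V, filt (sched (bid v)) ≤ v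
  bid_opt : ∀ v ∈ V, ∀ b ∈ B, filt (sched b) ≤ v →
    util (sched b) v ≤ util (sched (bid v)) v

namespace SWAC

variable {n : ℕ} {V : Set ℝ}

/-- Allocation of a bid. -/
def X (A : SWAC n V) (b : ℝ) : ℕ := (A.sched b).length

/-- Total payment of a bid. -/
noncomputable def P (A : SWAC n V) (b : ℝ) : ℝ := (A.sched b).sum

/-- Filter of a bid. -/
noncomputable def F (A : SWAC n V) (b : ℝ) : ℝ := filt (A.sched b)

/-- Utility of valuation `v` from bid `b`. -/
noncomputable def u (A : SWAC n V) (v b : ℝ) : ℝ := util (A.sched b) v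

/-- Net seller reward from valuation `v` bidding `b`, w.r.t. reward `g` and cost `c`. -/
noncomputable def r (A : SWAC n V) (g : ℝ → ℝ → ℝ) (c : ℕ → ℝ) (v b : ℝ) : ℝ :=
  gross g v (A.sched b) - c (A.X b)

/-- Net seller reward from valuation `v` under its chosen (optimal) bid. -/
noncomputable def R (A : SWAC n V) (g : ℝ → ℝ → ℝ) (c : ℕ → ℝ) (v : ℝ) : ℝ :=
  A.r g c v (A.bid v)

/-- Allocation of valuation `v` under its chosen bid. -/
def XA (A : SWAC n V) (v : ℝ) : ℕ := A.X (A.bid v)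

/-- Total payment of valuation `v` under its chosen bid. -/
noncomputable def PA (A : SWAC n V) (v : ℝ) : ℝ := A.P (A.bid v)

end SWAC

/-- Ties in the agent's utility are broken in favor of the seller,
w.r.t. reward `g` and cost `c`. -/
def TieFavor {n : ℕ} {V : Set ℝ} (g : ℝ → ℝ → ℝ) (c : ℕ → ℝ) (A : SWAC n V) : Prop :=
  ∀ v ∈ V, ∀ b ∈ A.B, filt (A.sched b) ≤ v →
    util (A.sched b) v = util (A.sched (A.bid v)) v →
    A.r g c v b ≤ A.r g c v (A.bid v)

/-- Expected seller reward `E[A] = 𝔼_{v ∼ D}[R_A(v)]`. -/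
noncomputable def ER {n : ℕ} {V : Set ℝ} (D : Measure ℝ) (g : ℝ → ℝ → ℝ) (c : ℕ → ℝ)
    (A : SWAC n V) : ℝ :=
  ∫ v, A.R g c v ∂D

/-- A SWAC is truthful if the bidding set is `V` and every agent bids its valuation. -/
def Truthful {n : ℕ} {V : Set ℝ} (A : SWAC n V) : Prop :=
  A.B = V ∧ ∀ v ∈ V, A.bid v = v

/-- A SWAC is optimal for the setting `(n, D, g, c)` if it maximizes the expected
reward among all SWACs for this setting. -/
def Optimal {n : ℕ} {V : Set ℝ} (D : Measure ℝ) (g : ℝ → ℝ → ℝ) (c : ℕ → ℝ)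
    (A : SWAC n V) : Prop :=
  TieFavor g c A ∧ ∀ A' : SWAC n V, TieFavor g c A' → ER D g c A' ≤ ER D g c A

/-- A SWAC is fixed-rate if every bid is charged the same payment on every day. -/
def FixedRate {n : ℕ} {V : Set ℝ} (A : SWAC n V) : Prop :=
  ∀ b ∈ A.B, ∃ p : ℝ, A.sched b = List.replicate (A.sched b).length p

/-- Strong allocation monotonicity. -/
def StronglyAllocMono {n : ℕ} {V : Set ℝ} (A : SWAC n V) : Prop :=
  ∀ w ∈ V, ∀ v ∈ V, w < v → A.XA w ≤ A.XA v

/-- Allocation monotonicity, up to a `D`-null set of valuations. -/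
def AllocMono {n : ℕ} {V : Set ℝ} (D : Measure ℝ) (A : SWAC n V) : Prop :=
  ∃ S : Set ℝ, D S = 0 ∧ ∀ w ∈ V \ S, ∀ v ∈ V \ S, w < v → A.XA w ≤ A.XA v

/-- Weak allocation monotonicity: up to a `D`-null set, allocation is monotone on
pairs with distinct seller rewards. -/
def WeaklyAllocMono {n : ℕ} {V : Set ℝ} (D : Measure ℝ) (g : ℝ → ℝ → ℝ) (c : ℕ → ℝ)
    (A : SWAC n V) : Prop :=
  ∃ S : Set ℝ, D S = 0 ∧ ∀ w ∈ V \ S, ∀ v ∈ V \ S, w < v →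
    A.R g c w ≠ A.R g c v → A.XA w ≤ A.XA v

/-- Reward monotonicity, up to a `D`-null set of valuations. -/
def RewardMono {n : ℕ} {V : Set ℝ} (D : Measure ℝ) (g : ℝ → ℝ → ℝ) (c : ℕ → ℝ)
    (A : SWAC n V) : Prop :=
  ∃ S : Set ℝ, D S = 0 ∧ ∀ w ∈ V \ S, ∀ v ∈ V \ S, w < v → A.R g c w ≤ A.R g c v

/-- A rental mechanism: for every horizon `h` and history of past bids, a SWAC with
`h` units that negotiates with the arriving agent, together with a designer-chosen
cost function for that SWAC (which governs the agent's tie-breaking in favor of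
the seller). -/
structure Mech (V : Set ℝ) (g : ℝ → ℝ → ℝ) where
  au : (h : ℕ) → List ℝ → SWAC h V
  mc : (h : ℕ) → List ℝ → ℕ → ℝ
  tie : ∀ (h : ℕ) (hist : List ℝ), TieFavor g (mc h hist) (au h hist)

/-- Expected total reward of a rental mechanism from a given horizon and history:
the arriving agent (drawn from `D h`) bids in the current SWAC, the designer
collects the gross reward `Σ_i g(v, p_i)` over the rented days, and the game
continues at horizon `h − max(x, 1)` once the asset is available again. -/
noncomputable def mechER (V : Set ℝ) (g : ℝ → ℝ → ℝ) (D : ℕ → Measure ℝ) (M : Mech V g) :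
    ℕ → List ℝ → ℝ
  | 0, _ => 0
  | h + 1, hist =>
    ∫ v,
      (gross g v ((M.au (h + 1) hist).sched ((M.au (h + 1) hist).bid v)) +
        mechER V g D M ((h + 1) - max ((M.au (h + 1) hist).XA v) 1)
          (hist ++ [(M.au (h + 1) hist).bid v])) ∂(D (h + 1))
  termination_by h _ => h
  decreasing_by
    exact Nat.sub_lt (Nat.succ_pos _) (lt_of_lt_of_le Nat.one_pos (le_max_right _ _))

/-- `R^{D⃗,g}_h`: the expected reward of an optimal rental mechanism for the last
`h` horizons. -/
noncomputable def optRental (V : Set ℝ) (g : ℝ → ℝ → ℝ) (D : ℕ → Measure ℝ) (h : ℕ) : ℝ :=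
  sSup {x : ℝ | ∃ M : Mech V g, x = mechER V g D M h []}

/-- The over-time cost function
`c^{D⃗}_{h,g}(x) = R^{D⃗,g}_{h−1} − R^{D⃗,g}_{h−max{x,1}}`. -/
noncomputable def overTimeCost (V : Set ℝ) (g : ℝ → ℝ → ℝ) (D : ℕ → Measure ℝ)
    (h : ℕ) (x : ℕ) : ℝ :=
  optRental V g D (h - 1) - optRental V g D (h - max x 1)

/-- The uniform distribution on `[0,1]`. -/
noncomputable def unif01 : Measure ℝ := volume.restrict (Set.Icc (0 : ℝ) 1)

/-- Consumer surplus reward `g(v,p) = v − p`. -/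
noncomputable def csg : ℝ → ℝ → ℝ := fun v p => v - p


section Aux

open Set

lemma gross_csg (v : ℝ) (l : List ℝ) : gross csg v l = util l v := by
  induction l with
  | nil => simp [gross, util]
  | cons a l ih =>
      simp only [gross, util, csg, List.map_cons, List.sum_cons, List.length_cons] at *
      push_cast
      linarith [ih]

lemma filt_nil : filt [] = 0 := by simp [filt]

lemma foldr_max_replicate {p : ℝ} (hp : 0 ≤ p) :
    ∀ L : ℕ, 1 ≤ L → (List.replicate L p).foldr max 0 = p := by
  intro L
  induction L with
  | zero => omega
  | succ k ih =>
      intro _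
      rcases Nat.eq_zero_or_pos k with hk | hk
      · subst hk; simpa using hp
      · rw [List.replicate_succ, List.foldr_cons, ih hk, max_self]

lemma filt_replicate (L : ℕ) (p : ℝ) (hL : 1 ≤ L) (hp : 0 ≤ p) :
    filt (List.replicate L p) = p := by
  unfold filt
  have hlen : (List.replicate L p).length = L := by simp
  rw [hlen]
  have hmap : ((List.range L).map fun k => ((List.replicate L p).take (k + 1)).sum / ((k : ℝ) + 1))
      = List.replicate L p := by
    have h1 : ∀ k ∈ List.range L,
        ((List.replicate L p).take (k + 1)).sum / ((k : ℝ) + 1) = p := by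
      intro k hk
      have hkL : k < L := List.mem_range.mp hk
      rw [List.take_replicate]
      have : min (k + 1) L = k + 1 := by omega
      rw [this, List.sum_replicate]
      have hk0 : ((k : ℝ) + 1) ≠ 0 := by positivity
      rw [nsmul_eq_mul]
      push_cast
      field_simp
    calc ((List.range L).map fun k => ((List.replicate L p).take (k + 1)).sum / ((k : ℝ) + 1))
        = (List.range L).map (fun _ => p) := List.map_congr_left h1
      _ = List.replicate L p := by
          rw [List.map_const']
          simp
  rw [hmap]
  exact foldr_max_replicate hp L hL

lemma filt_single_zero : filt [(0 : ℝ)] = 0 := by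
  have : [(0:ℝ)] = List.replicate 1 0 := rfl
  rw [this, filt_replicate 1 0 le_rfl le_rfl]

instance : IsProbabilityMeasure unif01 := by
  constructor
  rw [unif01, Measure.restrict_apply MeasurableSet.univ, Set.univ_inter, Real.volume_Icc]
  norm_num

lemma integral_unif01 (f : ℝ → ℝ) : ∫ v, f v ∂unif01 = ∫ v in (0:ℝ)..1, f v := by
  rw [intervalIntegral.integral_of_le zero_le_one, ← integral_Icc_eq_integral_Ioc]
  rfl

lemma integrable_unif01_iff (f : ℝ → ℝ) :
    Integrable f unif01 ↔ IntervalIntegrable f volume 0 1 := by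
  rw [intervalIntegrable_iff_integrableOn_Ioc_of_le zero_le_one,
    ← integrableOn_Icc_iff_integrableOn_Ioc]
  rfl

lemma integral_id_unif01 : ∫ v, v ∂unif01 = 1/2 := by
  rw [integral_unif01]
  simpa using (integral_id (a := 0) (b := 1))

lemma integral_le_const_unif01 (f : ℝ → ℝ) (C : ℝ) (hC : 0 ≤ C)
    (h : ∀ v ∈ Set.Icc (0:ℝ) 1, f v ≤ C) : ∫ v, f v ∂unif01 ≤ C := by
  by_cases hf : Integrable f unif01
  · have hae : ∀ᵐ v ∂unif01, f v ≤ (fun _ => C) v := by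
      have : ∀ᵐ v ∂(volume.restrict (Set.Icc (0:ℝ) 1)), f v ≤ C :=
        (ae_restrict_iff' measurableSet_Icc).2 (Filter.Eventually.of_forall h)
      exact this
    calc ∫ v, f v ∂unif01 ≤ ∫ _, C ∂unif01 := integral_mono_ae hf (integrable_const C) hae
      _ = C := by simp
  · rw [integral_undef hf]; exact hC

/-- The trivial SWAC: rents one day (if `h ≥ 1`) for free. -/
noncomputable def triv (h : ℕ) : SWAC h (Set.Icc (0:ℝ) 1) where
  B := Set.Icc 0 1
  sched := fun _ => List.replicate (min h 1) 0
  bid := fun v => v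
  len_le := fun b _ => by simp
  pay_nonneg := fun b _ p hp => le_of_eq (List.eq_of_mem_replicate hp).symm
  bid_mem := fun v hv => hv
  bid_IR := fun v hv => by
    rcases Nat.eq_zero_or_pos (min h 1) with h0 | h1
    · rw [h0]; simpa [filt_nil] using hv.1
    · rw [filt_replicate _ _ h1 le_rfl]; exact hv.1
  bid_opt := fun v _ b _ _ => le_rfl

lemma triv_tie (h : ℕ) (c : ℕ → ℝ) : TieFavor csg c (triv h) :=
  fun _ _ _ _ _ _ => le_rfl

lemma triv_fixedRate (h : ℕ) : FixedRate (triv h) :=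
  fun b _ => ⟨0, by simp [triv]⟩

example (V : Set ℝ) (g : ℝ → ℝ → ℝ) (D : ℕ → Measure ℝ) (M : Mech V g) (hist : List ℝ) :
    mechER V g D M 0 hist = 0 := by rw [mechER]

example (V : Set ℝ) (g : ℝ → ℝ → ℝ) (D : ℕ → Measure ℝ) (M : Mech V g) (h : ℕ) (hist : List ℝ) :
    mechER V g D M (h+1) hist = ∫ v,
      (gross g v ((M.au (h + 1) hist).sched ((M.au (h + 1) hist).bid v)) +
        mechER V g D M ((h + 1) - max ((M.au (h + 1) hist).XA v) 1)
          (hist ++ [(M.au (h + 1) hist).bid v])) ∂(D (h + 1)) := by rw [mechER]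

end Aux


section SWACfacts

variable {n : ℕ} (A : SWAC n (Set.Icc (0:ℝ) 1))

/-- Agent utility under the chosen bid. -/
noncomputable def uf (v : ℝ) : ℝ := util (A.sched (A.bid v)) v

/-- `max(allocation, 1)` under the chosen bid, as a real. -/
noncomputable def mf (v : ℝ) : ℝ := ((max (A.sched (A.bid v)).length 1 : ℕ) : ℝ)

lemma mf_one_le (v : ℝ) : (1:ℝ) ≤ mf A v := by
  unfold mf
  exact_mod_cast Nat.one_le_iff_ne_zero.mpr (by positivity)

lemma mf_nonneg (v : ℝ) : (0:ℝ) ≤ mf A v := le_trans zero_le_one (mf_one_le A v)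

lemma mf_le_n (hn : 1 ≤ n) {v : ℝ} (hv : v ∈ Set.Icc (0:ℝ) 1) : mf A v ≤ n := by
  have h1 := A.len_le _ (A.bid_mem v hv)
  unfold mf
  exact_mod_cast max_le h1 hn

lemma uf_monoOn : MonotoneOn (uf A) (Set.Icc (0:ℝ) 1) := by
  intro w hw v hv hwv
  have h1 := A.bid_opt v hv (A.bid w) (A.bid_mem w hw) (le_trans (A.bid_IR w hw) hwv)
  refine le_trans ?_ h1
  unfold uf util
  have hL : (0:ℝ) ≤ ((A.sched (A.bid w)).length : ℝ) := Nat.cast_nonneg _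
  nlinarith

/-- Structure of a fixed-rate chosen bid. -/
lemma fixed_struct (hA : FixedRate A) {v : ℝ} (hv : v ∈ Set.Icc (0:ℝ) 1) :
    uf A v = 0 ∨ ∃ p : ℝ, 0 ≤ p ∧ p ≤ v ∧
      A.sched (A.bid v) = List.replicate (A.sched (A.bid v)).length p ∧
      1 ≤ (A.sched (A.bid v)).length ∧
      uf A v = ((A.sched (A.bid v)).length : ℝ) * (v - p) := by
  obtain ⟨p, hp⟩ := hA (A.bid v) (A.bid_mem v hv)
  rcases Nat.eq_zero_or_pos (A.sched (A.bid v)).length with h0 | h1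
  · left
    have : A.sched (A.bid v) = [] := List.length_eq_zero_iff.mp h0
    simp [uf, util, this]
  · right
    have hmem : p ∈ A.sched (A.bid v) := by
      rw [hp]; exact List.mem_replicate.mpr ⟨by omega, rfl⟩
    have hp0 : 0 ≤ p := A.pay_nonneg _ (A.bid_mem v hv) p hmem
    have hfilt : filt (A.sched (A.bid v)) = p := by rw [hp]; exact filt_replicate _ p h1 hp0
    have hpv : p ≤ v := by rw [← hfilt]; exact A.bid_IR v hv
    refine ⟨p, hp0, hpv, hp, h1, ?_⟩
    unfold uf util
    rw [hp]
    simp only [List.length_replicate, List.sum_replicate, nsmul_eq_mul]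
    ring

lemma uf_nonneg (hA : FixedRate A) {v : ℝ} (hv : v ∈ Set.Icc (0:ℝ) 1) : 0 ≤ uf A v := by
  rcases fixed_struct A hA hv with h0 | ⟨p, hp0, hpv, _, _, heq⟩
  · rw [h0]
  · rw [heq]; have : (0:ℝ) ≤ ((A.sched (A.bid v)).length : ℝ) := Nat.cast_nonneg _
    nlinarith

lemma uf_le_mul (hA : FixedRate A) {v : ℝ} (hv : v ∈ Set.Icc (0:ℝ) 1) :
    uf A v ≤ mf A v * v := by
  have hv0 := hv.1
  have hm := mf_one_le A v
  rcases fixed_struct A hA hv with h0 | ⟨p, hp0, hpv, _, _, heq⟩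
  · rw [h0]; nlinarith
  · rw [heq]
    have hLm : ((A.sched (A.bid v)).length : ℝ) ≤ mf A v := by
      unfold mf; exact_mod_cast le_max_left _ _
    have : (0:ℝ) ≤ ((A.sched (A.bid v)).length : ℝ) := Nat.cast_nonneg _
    nlinarith

lemma uf_lip (hA : FixedRate A) {w v : ℝ} (hw : w ∈ Set.Icc (0:ℝ) 1)
    (hv : v ∈ Set.Icc (0:ℝ) 1) (hwv : w ≤ v) :
    uf A v - uf A w ≤ mf A v * (v - w) := by
  have hwnn := uf_nonneg A hA hw
  have hmnn := mf_nonneg A v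
  rcases fixed_struct A hA hv with h0 | ⟨p, hp0, hpv, hsched, hL1, heq⟩
  · rw [h0]; nlinarith
  · have hLm : ((A.sched (A.bid v)).length : ℝ) ≤ mf A v := by
      unfold mf; exact_mod_cast le_max_left _ _
    have hLnn : (0:ℝ) ≤ ((A.sched (A.bid v)).length : ℝ) := Nat.cast_nonneg _
    by_cases hpw : p ≤ w
    · have h2 := A.bid_opt w hw (A.bid v) (A.bid_mem v hv)
        (by rw [hsched, filt_replicate _ p hL1 hp0]; exact hpw)
      have h3 : ((A.sched (A.bid v)).length : ℝ) * w
          - ((A.sched (A.bid v)).length : ℝ) * p ≤ uf A w := by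
        refine le_trans (le_of_eq ?_) h2
        unfold util
        rw [hsched]
        simp only [List.length_replicate, List.sum_replicate, nsmul_eq_mul]
        try ring
      rw [heq]
      nlinarith
    · push_neg at hpw
      rw [heq]
      nlinarith

lemma uf_zero (hA : FixedRate A) : uf A 0 = 0 := by
  have h1 := uf_nonneg A hA (Set.mem_Icc.mpr ⟨le_rfl, zero_le_one⟩)
  have h2 := uf_le_mul A hA (Set.mem_Icc.mpr ⟨le_rfl, zero_le_one⟩)
  rw [mul_zero] at h2
  linarith

lemma uf_le_n (hA : FixedRate A) (hn : 1 ≤ n) {v : ℝ} (hv : v ∈ Set.Icc (0:ℝ) 1) :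
    uf A v ≤ n := by
  have h1 := uf_le_mul A hA hv
  have h2 := mf_le_n A hn hv
  have h3 := mf_nonneg A v
  nlinarith [hv.1, hv.2]

end SWACfacts


section Master

lemma master {n : ℕ} (hn : 1 ≤ n) (A : SWAC n (Set.Icc (0:ℝ) 1)) (hA : FixedRate A)
    (φ : ℝ → ℝ) (hint : Integrable φ unif01)
    (hφ : ∀ v ∈ Set.Icc (0:ℝ) 1, φ v ≤ uf A v - (mf A v - 1)/2) :
    ∫ v, φ v ∂unif01 ≤ 1/2 := by
  set u : ℝ → ℝ := uf A with hu
  set ue : ℝ → ℝ := fun s => uf A (max s 0) with hue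
  have hmono : MonotoneOn u (Set.Icc (0:ℝ) 1) := uf_monoOn A
  have hmonoe : MonotoneOn ue (Set.Icc (-1:ℝ) 1) := by
    intro a ha b hb hab
    have h1 : max a 0 ∈ Set.Icc (0:ℝ) 1 := ⟨le_max_right _ _, max_le (le_trans hab hb.2) zero_le_one⟩
    have h2 : max b 0 ∈ Set.Icc (0:ℝ) 1 := ⟨le_max_right _ _, max_le hb.2 zero_le_one⟩
    exact hmono h1 h2 (max_le_max hab le_rfl)
  have hnn : ∀ v ∈ Set.Icc (0:ℝ) 1, 0 ≤ u v := fun v hv => uf_nonneg A hA hv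
  have hub : ∀ v ∈ Set.Icc (0:ℝ) 1, u v ≤ n := fun v hv => uf_le_n A hA hn hv
  have hu0 : u 0 = 0 := uf_zero A hA
  have key : ∀ δ : ℝ, 0 < δ → δ ≤ 1 → 2 * ∫ v, φ v ∂unif01 ≤ 1 + δ * n := by
    intro δ hδ hδ1
    set G : ℝ → ℝ := fun v => u v + 1 - (1/δ) * ((1-v) * (u v - ue (v - δ))) with hG
    -- pointwise bound
    have hpt : ∀ v ∈ Set.Icc (0:ℝ) 1, 2 * φ v ≤ G v := by
      intro v hv
      have h1 := hφ v hv
      have hw01 : max (v - δ) 0 ∈ Set.Icc (0:ℝ) 1 :=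
        ⟨le_max_right _ _, max_le (by linarith [hv.2]) zero_le_one⟩
      have hwv : max (v - δ) 0 ≤ v := max_le (by linarith) hv.1
      have hvw : v - max (v - δ) 0 ≤ δ := by
        have := le_max_left (v - δ) 0
        linarith
      have hlip := uf_lip A hA hw01 hv hwv
      have hle := uf_le_mul A hA hv
      have hm1 := mf_one_le A v
      have h1v : 0 ≤ 1 - v := by linarith [hv.2]
      have hm0 : 0 ≤ mf A v := mf_nonneg A v
      have hkey : u v + (1/δ) * ((1-v) * (u v - ue (v - δ))) ≤ mf A v := by
        have huew : ue (v - δ) = u (max (v - δ) 0) := rfl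
        have e1 : (1/δ) * ((1-v) * (u v - ue (v - δ))) ≤ (1-v) * mf A v := by
          rw [huew, one_div, inv_mul_le_iff₀ hδ]
          have h5 : u v - u (max (v - δ) 0) ≤ mf A v * δ := by nlinarith
          nlinarith
        nlinarith
      simp only [hG]
      linarith
    -- interval integrabilities
    have hIu : IntervalIntegrable u volume 0 1 := by
      apply MonotoneOn.intervalIntegrable
      rwa [Set.uIcc_of_le zero_le_one]
    have hIue : ∀ a b : ℝ, a ∈ Set.Icc (-1:ℝ) 1 → b ∈ Set.Icc (-1:ℝ) 1 →
        IntervalIntegrable ue volume a b := by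
      intro a b ha hb
      apply MonotoneOn.intervalIntegrable
      exact hmonoe.mono (Set.uIcc_subset_Icc ha hb)
    have hIsh : IntervalIntegrable (fun v => ue (v - δ)) volume 0 1 := by
      have h0 := (hIue (-δ) (1-δ) ⟨by linarith, by linarith⟩
        ⟨by linarith, by linarith⟩).comp_sub_right δ
      have e1 : -δ + δ = (0:ℝ) := by ring
      have e2 : 1 - δ + δ = (1:ℝ) := by ring
      rwa [e1, e2] at h0
    have hID : IntervalIntegrable (fun v => (1-v) * (u v - ue (v - δ))) volume 0 1 :=
      (hIu.sub hIsh).continuousOn_mul (by fun_prop)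
    have hIG : IntervalIntegrable G volume 0 1 := by
      exact (hIu.add intervalIntegrable_const).sub (hID.const_mul (1/δ))
    -- integral inequality
    have step1 : ∫ v, 2 * φ v ∂unif01 ≤ ∫ v, G v ∂unif01 := by
      apply integral_mono_ae (hint.const_mul 2) ((integrable_unif01_iff G).mpr hIG)
      have : ∀ᵐ v ∂(volume.restrict (Set.Icc (0:ℝ) 1)), 2 * φ v ≤ G v :=
        (ae_restrict_iff' measurableSet_Icc).2 (Filter.Eventually.of_forall hpt)
      exact this
    -- compute ∫ G
    have hGsplit : ∫ v, G v ∂unif01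
        = (∫ v in (0:ℝ)..1, u v) + 1 - (1/δ) * ∫ v in (0:ℝ)..1, (1-v) * (u v - ue (v - δ)) := by
      rw [integral_unif01]
      rw [intervalIntegral.integral_sub (hIu.add intervalIntegrable_const) (hID.const_mul (1/δ))]
      rw [intervalIntegral.integral_add hIu intervalIntegrable_const]
      rw [intervalIntegral.integral_const_mul]
      simp
    -- the shift estimate
    set Iu : ℝ := ∫ v in (0:ℝ)..1, u v with hIudef
    have hK : ∫ v in (0:ℝ)..1, (1-v) * (u v - ue (v - δ)) ≥ δ * (Iu - δ * n) := by
      have hJsub : ∫ v in (0:ℝ)..1, (1-v) * (u v - ue (v - δ))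
          = (∫ v in (0:ℝ)..1, (1-v) * u v) - ∫ v in (0:ℝ)..1, (1-v) * ue (v - δ) := by
        rw [← intervalIntegral.integral_sub (hIu.continuousOn_mul (by fun_prop))
          (hIsh.continuousOn_mul (by fun_prop))]
        apply intervalIntegral.integral_congr
        intro x _
        ring
      -- J' computation
      have hJ' : ∫ v in (0:ℝ)..1, (1-v) * ue (v - δ)
          = ∫ s in (0:ℝ)..(1-δ), (1 - δ - s) * u s := by
        have e1 : ∫ v in (0:ℝ)..1, (1-v) * ue (v - δ)
            = ∫ v in (0:ℝ)..1, (fun s => (1 - δ - s) * ue s) (v - δ) := by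
          apply intervalIntegral.integral_congr
          intro x _
          simp only
          ring_nf
        rw [e1, intervalIntegral.integral_comp_sub_right (fun s => (1 - δ - s) * ue s) δ]
        have e2 : (0:ℝ) - δ = -δ := by ring
        have e3 : IntervalIntegrable (fun s => (1 - δ - s) * ue s) volume (-δ) 0 :=
          (hIue _ _ ⟨by linarith, by linarith⟩ ⟨by linarith, by linarith⟩).continuousOn_mul (by fun_prop)
        have e4 : IntervalIntegrable (fun s => (1 - δ - s) * ue s) volume 0 (1-δ) :=
          (hIue _ _ ⟨by linarith, by linarith⟩ ⟨by linarith, by linarith⟩).continuousOn_mul (by fun_prop)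
        rw [e2, ← intervalIntegral.integral_add_adjacent_intervals e3 e4]
        have e5 : ∫ s in (-δ:ℝ)..0, (1 - δ - s) * ue s = 0 := by
          rw [intervalIntegral.integral_congr (g := fun _ => (0:ℝ))]
          · simp
          · intro s hs
            rw [Set.uIcc_of_le (by linarith : (-δ:ℝ) ≤ 0)] at hs
            have : max s 0 = 0 := max_eq_right hs.2
            simp only [hue]
            rw [this]
            have : uf A 0 = 0 := hu0
            rw [this, mul_zero]
        have e6 : ∫ s in (0:ℝ)..(1-δ), (1 - δ - s) * ue s
            = ∫ s in (0:ℝ)..(1-δ), (1 - δ - s) * u s := by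
          apply intervalIntegral.integral_congr
          intro s hs
          rw [Set.uIcc_of_le (by linarith : (0:ℝ) ≤ 1 - δ)] at hs
          have : max s 0 = s := max_eq_left hs.1
          simp only [hue]
          rw [this]
        rw [e5, e6, zero_add]
      -- J split
      have hu1 : IntervalIntegrable u volume 0 (1-δ) :=
        (hmono.mono (Set.uIcc_subset_Icc ⟨le_rfl, zero_le_one⟩ ⟨by linarith, by linarith⟩)).intervalIntegrable
      have hu2 : IntervalIntegrable u volume (1-δ) 1 :=
        (hmono.mono (Set.uIcc_subset_Icc ⟨by linarith, by linarith⟩ ⟨zero_le_one, le_rfl⟩)).intervalIntegrable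
      have hJ : ∫ v in (0:ℝ)..1, (1-v) * u v
          = (∫ v in (0:ℝ)..(1-δ), (1-v) * u v) + ∫ v in (1-δ:ℝ)..1, (1-v) * u v := by
        rw [intervalIntegral.integral_add_adjacent_intervals
          (hu1.continuousOn_mul (by fun_prop)) (hu2.continuousOn_mul (by fun_prop))]
      have hdiff : (∫ v in (0:ℝ)..(1-δ), (1-v) * u v) - ∫ s in (0:ℝ)..(1-δ), (1 - δ - s) * u s
          = δ * ∫ v in (0:ℝ)..(1-δ), u v := by
        rw [← intervalIntegral.integral_const_mul,
          ← intervalIntegral.integral_sub (hu1.continuousOn_mul (by fun_prop))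
            (hu1.continuousOn_mul (by fun_prop))]
        apply intervalIntegral.integral_congr
        intro x _
        ring
      have htail : 0 ≤ ∫ v in (1-δ:ℝ)..1, (1-v) * u v := by
        apply intervalIntegral.integral_nonneg (by linarith)
        intro x hx
        have hx01 : x ∈ Set.Icc (0:ℝ) 1 := ⟨by linarith [hx.1], hx.2⟩
        have := hnn x hx01
        nlinarith [hx.2]
      have htail2 : ∫ v in (1-δ:ℝ)..1, u v ≤ δ * n := by
        have : ∫ v in (1-δ:ℝ)..1, u v ≤ ∫ _ in (1-δ:ℝ)..1, (n:ℝ) := by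
          apply intervalIntegral.integral_mono_on (by linarith) hu2 intervalIntegrable_const
          intro x hx
          exact hub x ⟨by linarith [hx.1], hx.2⟩
        rw [intervalIntegral.integral_const, smul_eq_mul] at this
        calc ∫ v in (1-δ:ℝ)..1, u v ≤ (1 - (1-δ)) * n := this
          _ = δ * n := by ring
      have hsplitIu : ∫ v in (0:ℝ)..(1-δ), u v = Iu - ∫ v in (1-δ:ℝ)..1, u v := by
        rw [hIudef, ← intervalIntegral.integral_add_adjacent_intervals hu1 hu2]
        ring
      rw [hJsub, hJ', hJ]
      have : (∫ v in (0:ℝ)..(1-δ), (1-v) * u v) - (∫ s in (0:ℝ)..(1-δ), (1 - δ - s) * u s)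
          = δ * (Iu - ∫ v in (1-δ:ℝ)..1, u v) := by rw [hdiff, hsplitIu]
      nlinarith [htail, htail2, this]
    -- put together
    have h2phi : ∫ v, 2 * φ v ∂unif01 = 2 * ∫ v, φ v ∂unif01 := by
      rw [integral_const_mul]
    have hfin : 2 * ∫ v, φ v ∂unif01 ≤ Iu + 1 - (1/δ) * (δ * (Iu - δ * n)) := by
      rw [← h2phi]
      refine le_trans step1 ?_
      rw [hGsplit]
      have : (1/δ) * (δ * (Iu - δ * n)) ≤ (1/δ) * ∫ v in (0:ℝ)..1, (1-v) * (u v - ue (v - δ)) := by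
        apply mul_le_mul_of_nonneg_left hK (by positivity)
      linarith
    have : (1/δ) * (δ * (Iu - δ * n)) = Iu - δ * n := by
      field_simp
    linarith [hfin, this.symm ▸ hfin]
  -- conclude
  have h2 : 2 * ∫ v, φ v ∂unif01 ≤ 1 := by
    refine le_of_forall_pos_le_add fun ε hε => ?_
    have hn' : (0:ℝ) < n := by exact_mod_cast Nat.lt_of_lt_of_le Nat.zero_lt_one hn
    have hδpos : 0 < min 1 (ε / n) := lt_min one_pos (by positivity)
    have h3 := key _ hδpos (min_le_left _ _)
    have h4 : min 1 (ε / n) * n ≤ ε := by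
      have : min 1 (ε / n) ≤ ε / n := min_le_right _ _
      calc min 1 (ε / n) * n ≤ (ε / n) * n := by nlinarith
        _ = ε := by field_simp
    linarith
  linarith

end Master


section MechFacts

/-- Generic upper bound: a rental mechanism earns at most `h` over `h` days. -/
lemma mechER_le_h (M : Mech (Set.Icc (0:ℝ) 1) csg) :
    ∀ h : ℕ, ∀ hist : List ℝ,
      mechER (Set.Icc (0:ℝ) 1) csg (fun _ => unif01) M h hist ≤ (h : ℝ) := by
  intro h
  induction h using Nat.strong_induction_on with
  | _ h IH =>
    match h with
    | 0 => intro hist; rw [mechER]; norm_num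
    | Nat.succ h =>
      intro hist
      rw [mechER]
      apply integral_le_const_unif01 _ _ (by positivity)
      intro v hv
      set A := M.au (h+1) hist with hAdef
      have hbm := A.bid_mem v hv
      have hL : (A.sched (A.bid v)).length ≤ h + 1 := A.len_le _ hbm
      have hsum : 0 ≤ (A.sched (A.bid v)).sum :=
        List.sum_nonneg (fun p hp => A.pay_nonneg _ hbm p hp)
      have hXA : A.XA v = (A.sched (A.bid v)).length := rfl
      have hmle : max (A.XA v) 1 ≤ h + 1 := by rw [hXA]; omega
      have hg : gross csg v (A.sched (A.bid v)) ≤ ((max (A.XA v) 1 : ℕ) : ℝ) := by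
        rw [gross_csg]
        unfold util
        have h1 : ((A.sched (A.bid v)).length : ℝ) ≤ ((max (A.XA v) 1 : ℕ) : ℝ) := by
          exact_mod_cast by rw [hXA]; omega
        have h2 : (0:ℝ) ≤ ((A.sched (A.bid v)).length : ℝ) := Nat.cast_nonneg _
        nlinarith [hv.1, hv.2]
      have hrec := IH (h + 1 - max (A.XA v) 1) (by omega) (hist ++ [A.bid v])
      have hcast : ((h + 1 - max (A.XA v) 1 : ℕ) : ℝ)
          = ((h:ℝ) + 1) - ((max (A.XA v) 1 : ℕ) : ℝ) := by
        rw [Nat.cast_sub hmle]; push_cast; ring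
      rw [hcast] at hrec
      push_cast
      linarith

/-- Fixed-rate upper bound: at most `h/2` over `h` days. -/
lemma mechER_fixed_le (M : Mech (Set.Icc (0:ℝ) 1) csg)
    (hM : ∀ h hist, FixedRate (M.au h hist)) :
    ∀ h : ℕ, ∀ hist : List ℝ,
      mechER (Set.Icc (0:ℝ) 1) csg (fun _ => unif01) M h hist ≤ (h : ℝ) / 2 := by
  intro h
  induction h using Nat.strong_induction_on with
  | _ h IH =>
    match h with
    | 0 => intro hist; rw [mechER]; norm_num
    | Nat.succ h =>
      intro hist
      rw [mechER]
      set A := M.au (h+1) hist with hAdef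
      set ψ : ℝ → ℝ := fun v => gross csg v (A.sched (A.bid v)) +
        mechER (Set.Icc (0:ℝ) 1) csg (fun _ => unif01) M ((h+1) - max (A.XA v) 1)
          (hist ++ [A.bid v]) with hψ
      push_cast
      show ∫ v, ψ v ∂unif01 ≤ ((h:ℝ)+1)/2
      by_cases hint : Integrable ψ unif01
      · have hbound : ∀ v ∈ Set.Icc (0:ℝ) 1, ψ v - (h:ℝ)/2 ≤ uf A v - (mf A v - 1)/2 := by
          intro v hv
          have hbm := A.bid_mem v hv
          have hXA : A.XA v = (A.sched (A.bid v)).length := rfl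
          have hmle : max (A.XA v) 1 ≤ h + 1 := by
            have := A.len_le _ hbm; rw [hXA]; omega
          have hrec := IH (h + 1 - max (A.XA v) 1) (by omega) (hist ++ [A.bid v])
          have hcast : ((h + 1 - max (A.XA v) 1 : ℕ) : ℝ)
              = ((h:ℝ) + 1) - ((max (A.XA v) 1 : ℕ) : ℝ) := by
            rw [Nat.cast_sub hmle]; push_cast; ring
          rw [hcast] at hrec
          have hgr : gross csg v (A.sched (A.bid v)) = uf A v := gross_csg v _
          have hmf : mf A v = ((max (A.XA v) 1 : ℕ) : ℝ) := by
            unfold mf; rw [hXA]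
          simp only [hψ]
          rw [hgr, hmf]
          linarith
        have h1 := master (Nat.succ_le_succ (Nat.zero_le h)) A (hM _ _)
          (fun v => ψ v - (h:ℝ)/2) (hint.sub (integrable_const _)) hbound
        rw [integral_sub hint (integrable_const _), integral_const] at h1
        simp only [measure_univ, ENNReal.toReal_one, probReal_univ, smul_eq_mul, one_mul] at h1
        linarith
      · rw [integral_undef hint]
        positivity

/-- The trivial rental mechanism: rent one day for free, always. -/
noncomputable def trivMech : Mech (Set.Icc (0:ℝ) 1) csg where
  au h _ := triv h
  mc _ _ := fun _ => 0
  tie h hist := triv_tie h _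

lemma trivMech_fixed : ∀ (h : ℕ) (hist : List ℝ), FixedRate (trivMech.au h hist) :=
  fun h _ => triv_fixedRate h

lemma trivMech_val :
    ∀ h : ℕ, ∀ hist : List ℝ,
      mechER (Set.Icc (0:ℝ) 1) csg (fun _ => unif01) trivMech h hist = (h : ℝ) / 2 := by
  intro h
  induction h with
  | zero => intro hist; rw [mechER]; norm_num
  | succ h IH =>
      intro hist
      rw [mechER]
      have hsched : ∀ b : ℝ, (trivMech.au (h+1) hist).sched b = [0] := by
        intro b
        show List.replicate (min (h+1) 1) 0 = [0]
        have : min (h+1) 1 = 1 := by omega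
        rw [this]
        rfl
      have hXA : ∀ v : ℝ, (trivMech.au (h+1) hist).XA v = 1 := by
        intro v
        show ((trivMech.au (h+1) hist).sched _).length = 1
        rw [hsched]
        rfl
      have hintg : (fun v => (gross csg v ((trivMech.au (h + 1) hist).sched ((trivMech.au (h + 1) hist).bid v)) +
          mechER (Set.Icc (0:ℝ) 1) csg (fun _ => unif01) trivMech ((h + 1) - max ((trivMech.au (h + 1) hist).XA v) 1)
            (hist ++ [(trivMech.au (h + 1) hist).bid v])))
          = fun v => v + (h:ℝ)/2 := by
        funext v
        rw [hsched, hXA]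
        have h1 : h + 1 - max 1 1 = h := by omega
        rw [h1, IH]
        simp [gross, csg]
      rw [hintg]
      have hid : Integrable (fun v : ℝ => v) unif01 := by
        rw [integrable_unif01_iff]
        exact continuous_id.intervalIntegrable 0 1
      rw [integral_add hid (integrable_const _), integral_id_unif01, integral_const]
      simp only [measure_univ, ENNReal.toReal_one, probReal_univ, smul_eq_mul, one_mul]
      push_cast
      ring

/-- Prefix a mechanism with one free day. -/
noncomputable def shiftMech (M : Mech (Set.Icc (0:ℝ) 1) csg) : Mech (Set.Icc (0:ℝ) 1) csg where
  au h hist := match hist with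
    | [] => triv h
    | _ :: t => M.au h t
  mc h hist := match hist with
    | [] => fun _ => 0
    | _ :: t => M.mc h t
  tie h hist := by
    cases hist with
    | nil => exact triv_tie h _
    | cons a t => exact M.tie h t

lemma shiftMech_eq (M : Mech (Set.Icc (0:ℝ) 1) csg) :
    ∀ h : ℕ, ∀ hist : List ℝ, hist ≠ [] →
      mechER (Set.Icc (0:ℝ) 1) csg (fun _ => unif01) (shiftMech M) h hist
        = mechER (Set.Icc (0:ℝ) 1) csg (fun _ => unif01) M h hist.tail := by
  intro h
  induction h using Nat.strong_induction_on with
  | _ h IH =>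
    match h with
    | 0 => intro hist _; rw [mechER, mechER]
    | Nat.succ h =>
      rintro hist hne
      obtain ⟨a, t, rfl⟩ : ∃ a t, hist = a :: t := by
        cases hist with
        | nil => exact absurd rfl hne
        | cons a t => exact ⟨a, t, rfl⟩
      rw [mechER, mechER]
      apply integral_congr_ae
      apply Filter.Eventually.of_forall
      intro v
      have hau : (shiftMech M).au (h+1) (a :: t) = M.au (h+1) t := rfl
      simp only [List.tail_cons]
      rw [hau]
      rw [IH (h + 1 - max ((M.au (h+1) t).XA v) 1)
        (Nat.sub_lt (Nat.succ_pos _) (lt_of_lt_of_le Nat.one_pos (le_max_right _ _)))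
        ((a :: t) ++ [(M.au (h+1) t).bid v]) (by simp)]
      simp

lemma shiftMech_val (M : Mech (Set.Icc (0:ℝ) 1) csg) (k : ℕ) :
    mechER (Set.Icc (0:ℝ) 1) csg (fun _ => unif01) (shiftMech M) (k+1) []
      = 1/2 + mechER (Set.Icc (0:ℝ) 1) csg (fun _ => unif01) M k [] := by
  rw [mechER]
  have hau : (shiftMech M).au (k+1) ([] : List ℝ) = triv (k+1) := rfl
  have hsched : ∀ b : ℝ, ((shiftMech M).au (k+1) ([] : List ℝ)).sched b = [0] := by
    intro b
    rw [hau]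
    show List.replicate (min (k+1) 1) 0 = [0]
    have : min (k+1) 1 = 1 := by omega
    rw [this]; rfl
  have hXA : ∀ v : ℝ, ((shiftMech M).au (k+1) ([] : List ℝ)).XA v = 1 := by
    intro v
    show (((shiftMech M).au (k+1) ([] : List ℝ)).sched _).length = 1
    rw [hsched]; rfl
  have hbid : ∀ v : ℝ, ((shiftMech M).au (k+1) ([] : List ℝ)).bid v = v := fun v => rfl
  have hintg : (fun v => (gross csg v (((shiftMech M).au (k + 1) []).sched (((shiftMech M).au (k + 1) []).bid v)) +
      mechER (Set.Icc (0:ℝ) 1) csg (fun _ => unif01) (shiftMech M) ((k + 1) - max (((shiftMech M).au (k + 1) []).XA v) 1)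
        ([] ++ [((shiftMech M).au (k + 1) []).bid v])))
      = fun v => v + mechER (Set.Icc (0:ℝ) 1) csg (fun _ => unif01) M k [] := by
    funext v
    rw [hsched, hXA, hbid]
    have h1 : k + 1 - max 1 1 = k := by omega
    rw [h1]
    have h2 : ([] ++ [v] : List ℝ) = [v] := rfl
    rw [h2, shiftMech_eq M k [v] (by simp)]
    simp [gross, csg]
  rw [hintg]
  have hid : Integrable (fun v : ℝ => v) unif01 := by
    rw [integrable_unif01_iff]
    exact continuous_id.intervalIntegrable 0 1
  rw [integral_add hid (integrable_const _), integral_id_unif01, integral_const]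
  simp only [measure_univ, ENNReal.toReal_one, probReal_univ, smul_eq_mul, one_mul]

end MechFacts

section OptRentalFacts

/-- The set of achievable rewards. -/
def Sh (h : ℕ) : Set ℝ :=
  {x : ℝ | ∃ M : Mech (Set.Icc (0:ℝ) 1) csg,
    x = mechER (Set.Icc (0:ℝ) 1) csg (fun _ => unif01) M h []}

lemma optRental_eq_sSup (h : ℕ) :
    optRental (Set.Icc (0:ℝ) 1) csg (fun _ => unif01) h = sSup (Sh h) := rfl

lemma Sh_nonempty (h : ℕ) : (Sh h).Nonempty := ⟨_, trivMech, rfl⟩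

lemma Sh_bddAbove (h : ℕ) : BddAbove (Sh h) := by
  refine ⟨(h : ℝ), ?_⟩
  rintro x ⟨M, rfl⟩
  exact mechER_le_h M h []

lemma optRental_zero : optRental (Set.Icc (0:ℝ) 1) csg (fun _ => unif01) 0 = 0 := by
  rw [optRental_eq_sSup]
  have : Sh 0 = {0} := by
    ext x
    simp only [Sh, Set.mem_setOf_eq, Set.mem_singleton_iff]
    constructor
    · rintro ⟨M, rfl⟩
      rw [mechER]
    · rintro rfl
      exact ⟨trivMech, by rw [mechER]⟩
  rw [this, csSup_singleton]

lemma optRental_succ (k : ℕ) :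
    optRental (Set.Icc (0:ℝ) 1) csg (fun _ => unif01) k + 1/2
      ≤ optRental (Set.Icc (0:ℝ) 1) csg (fun _ => unif01) (k+1) := by
  rw [optRental_eq_sSup, optRental_eq_sSup]
  have h1 : ∀ x ∈ Sh k, x + 1/2 ≤ sSup (Sh (k+1)) := by
    rintro x ⟨M, rfl⟩
    have hmem : mechER (Set.Icc (0:ℝ) 1) csg (fun _ => unif01) M k [] + 1/2 ∈ Sh (k+1) :=
      ⟨shiftMech M, by rw [shiftMech_val]; ring⟩
    exact le_csSup (Sh_bddAbove (k+1)) hmem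
  have h2 : sSup (Sh k) ≤ sSup (Sh (k+1)) - 1/2 := by
    apply csSup_le (Sh_nonempty k)
    intro x hx
    linarith [h1 x hx]
  linarith

lemma optRental_incr (a d : ℕ) :
    optRental (Set.Icc (0:ℝ) 1) csg (fun _ => unif01) a + (d : ℝ)/2
      ≤ optRental (Set.Icc (0:ℝ) 1) csg (fun _ => unif01) (a + d) := by
  induction d with
  | zero => simp
  | succ d IH =>
      have h1 := optRental_succ (a + d)
      push_cast
      push_cast at IH
      have : a + (d + 1) = (a + d) + 1 := by ring
      rw [this]
      push_cast
      linarith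

lemma overTimeCost_ge {n : ℕ} (hn : 1 ≤ n) {L : ℕ} (hL : L ≤ n) :
    ((max L 1 : ℕ) : ℝ) / 2 - 1/2 ≤ overTimeCost (Set.Icc (0:ℝ) 1) csg (fun _ => unif01) n L := by
  rw [overTimeCost]
  set m := max L 1 with hm
  have hm1 : 1 ≤ m := le_max_right _ _
  have hmn : m ≤ n := max_le hL hn
  have heq : (n - m) + (m - 1) = n - 1 := by omega
  have h1 := optRental_incr (n - m) (m - 1)
  rw [heq] at h1
  have hcast : ((m - 1 : ℕ) : ℝ) = (m : ℝ) - 1 := by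
    rw [Nat.cast_sub hm1]; norm_num
  rw [hcast] at h1
  linarith

end OptRentalFacts


section Final

/-- The SWAC that sells exactly one unit to every agent for free. -/
noncomputable def oneFree (n : ℕ) (hn : 1 ≤ n) : SWAC n (Set.Icc (0:ℝ) 1) where
  B := Set.Icc 0 1
  sched := fun _ => [0]
  bid := fun v => v
  len_le := fun _ _ => by simpa using hn
  pay_nonneg := fun b _ p hp => by
    simp only [List.mem_singleton] at hp
    simp [hp]
  bid_mem := fun v hv => hv
  bid_IR := fun v hv => by rw [filt_single_zero]; exact hv.1
  bid_opt := fun _ _ _ _ _ => le_rfl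

lemma oneFree_R (n : ℕ) (hn : 1 ≤ n) (v : ℝ) :
    (oneFree n hn).R csg (overTimeCost (Set.Icc (0:ℝ) 1) csg (fun _ => unif01) n) v = v := by
  show gross csg v [0] - overTimeCost (Set.Icc (0:ℝ) 1) csg (fun _ => unif01) n
    ((oneFree n hn).X ((oneFree n hn).bid v)) = v
  have hX : (oneFree n hn).X ((oneFree n hn).bid v) = 1 := rfl
  rw [hX, overTimeCost]
  simp [gross, csg]

lemma oneFree_ER (n : ℕ) (hn : 1 ≤ n) :
    ER unif01 csg (overTimeCost (Set.Icc (0:ℝ) 1) csg (fun _ => unif01) n) (oneFree n hn)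
      = 1/2 := by
  unfold ER
  simp only [oneFree_R]
  exact integral_id_unif01

end Final

/-- In the setting `S_n` (valuations uniform on `[0,1]`, consumer
surplus reward, over-time cost of the `n`-day i.i.d. rental game):
(1) among fixed-rate SWACs it is w.l.o.g. optimal to sell exactly one unit to every
agent for free, achieving expected reward `1/2`;
(2) the optimal `n`-day rental reward satisfies `R_n ≥ n/2`; and
(3) the optimal expected reward among fixed-rate rental mechanisms is exactly `n/2`. -/
theorem uniform_consumer_surplus_fixed_rate_benchmarks
    (n : ℕ) (hn : 1 ≤ n) :
    (∃ A : SWAC n (Set.Icc (0 : ℝ) 1),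
      (∀ b, A.sched b = [0]) ∧ Truthful A ∧ FixedRate A ∧
      TieFavor csg (overTimeCost (Set.Icc (0 : ℝ) 1) csg (fun _ => unif01) n) A ∧
      ER unif01 csg (overTimeCost (Set.Icc (0 : ℝ) 1) csg (fun _ => unif01) n) A = 1 / 2 ∧
      (∀ A' : SWAC n (Set.Icc (0 : ℝ) 1), FixedRate A' →
        TieFavor csg (overTimeCost (Set.Icc (0 : ℝ) 1) csg (fun _ => unif01) n) A' →
        ER unif01 csg (overTimeCost (Set.Icc (0 : ℝ) 1) csg (fun _ => unif01) n) A' ≤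
          ER unif01 csg (overTimeCost (Set.Icc (0 : ℝ) 1) csg (fun _ => unif01) n) A)) ∧
    ((n : ℝ) / 2 ≤ optRental (Set.Icc (0 : ℝ) 1) csg (fun _ => unif01) n) ∧
    (sSup {x : ℝ | ∃ M : Mech (Set.Icc (0 : ℝ) 1) csg,
        (∀ (h : ℕ) (hist : List ℝ), FixedRate (M.au h hist)) ∧
        x = mechER (Set.Icc (0 : ℝ) 1) csg (fun _ => unif01) M n []} = (n : ℝ) / 2) := by
  constructor
  · -- Part 1
    set c := overTimeCost (Set.Icc (0:ℝ) 1) csg (fun _ => unif01) n with hc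
    refine ⟨oneFree n hn, fun _ => rfl, ⟨rfl, fun v _ => rfl⟩, fun b _ => ⟨0, rfl⟩,
      fun _ _ _ _ _ _ => le_rfl, oneFree_ER n hn, ?_⟩
    intro A' hFR hTie
    rw [oneFree_ER n hn]
    by_cases hi : Integrable (A'.R csg c) unif01
    · apply master hn A' hFR _ hi
      intro v hv
      have hbm := A'.bid_mem v hv
      have hL : (A'.sched (A'.bid v)).length ≤ n := A'.len_le _ hbm
      have hcost := overTimeCost_ge hn hL
      have hR : A'.R csg c v = uf A' v
          - c ((A'.sched (A'.bid v)).length) := by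
        show gross csg v (A'.sched (A'.bid v)) - c (A'.X (A'.bid v)) = _
        rw [gross_csg]
        rfl
      have hmf : mf A' v = ((max (A'.sched (A'.bid v)).length 1 : ℕ) : ℝ) := rfl
      rw [hR, hmf, hc]
      linarith
    · show ∫ v, A'.R csg c v ∂unif01 ≤ 1/2
      rw [integral_undef hi]
      norm_num
  constructor
  · -- Part 2
    have h1 := optRental_incr 0 n
    rw [optRental_zero] at h1
    simpa using h1
  · -- Part 3
    apply IsGreatest.csSup_eq
    constructor
    · exact ⟨trivMech, trivMech_fixed, (trivMech_val n []).symm⟩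
    · rintro x ⟨M, hfix, rfl⟩
      exact mechER_fixed_le M hfix n []

end RentalGame
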